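/- arXiv:0903.5528 — 3 statements merged into one kernel-verified Lean document; each statement's English description precedes it below -/
import Mathlib

section
/- Let n ≥ 3, let U ⊆ ℝ^n be open, let f : U → ℝ^{n+2} be a parabolic smooth immersion, and let g : U → ℝ^{n+1} be a smooth immersion isometric to f. Then the relative nullity spaces of f and g coincide at every point: Δ_g(x) = Δ_f(x) for all x ∈ U. -/
noncomputable section

open scoped RealInnerProductSpace
open Module Set

/-- Euclidean space ℝ^k. -/
abbrev Euc (k : ℕ) : Type := EuclideanSpace ℝ (Fin k)

variable {E : Type*} [NormedAddCommGroup E] [NormedSpace ℝ E] {m : ℕ}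

/-- Tangent space of an immersion at a point: range of the differential. -/
def TangentSp (f : E → Euc m) (x : E) : Submodule ℝ (Euc m) :=
  LinearMap.range (fderiv ℝ f x).toLinearMap

/-- Normal space: orthogonal complement of the tangent space. -/
def NormalSp (f : E → Euc m) (x : E) : Submodule ℝ (Euc m) := (TangentSp f x)ᗮ

/-- Orthogonal projection of the ambient space onto the normal space. -/
def normalProj (f : E → Euc m) (x : E) : Euc m →L[ℝ] Euc m :=
  (NormalSp f x).subtypeL.comp ((NormalSp f x).orthogonalProjectionOnto)

/-- Orthogonal projection of the ambient space onto the tangent space. -/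
def tangentProj (f : E → Euc m) (x : E) : Euc m →L[ℝ] Euc m :=
  (TangentSp f x).subtypeL.comp ((TangentSp f x).orthogonalProjectionOnto)

/-- The second fundamental form as a continuous linear operator in the first variable,
with second argument `Y` fixed. -/
def sffOp (f : E → Euc m) (x : E) (Y : E) : E →L[ℝ] Euc m :=
  (normalProj f x).comp (fderiv ℝ (fun y => fderiv ℝ f y Y) x)

/-- The second fundamental form `α_f(x)(X,Y)`: normal component of the second derivative. -/
def sff (f : E → Euc m) (x : E) (X Y : E) : Euc m := sffOp f x Y X

/-- Relative nullity subspace `Δ_f(x) = {X : α_f(x)(X,Y)=0 for all Y}`. -/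
def relNullity (f : E → Euc m) (x : E) : Submodule ℝ E :=
  ⨅ Y : E, LinearMap.ker (sffOp f x Y : E →ₗ[ℝ] Euc m)

/-- `f` is a smooth immersion on `U`. -/
def IsImmersionOn (f : E → Euc m) (U : Set E) : Prop :=
  ContDiffOn ℝ (⊤ : ℕ∞) f U ∧ ∀ x ∈ U, Function.Injective (fderiv ℝ f x)

/-- `f` and `g` induce the same metric on `U`. -/
def SameMetricOn {m' : ℕ} (f : E → Euc m) (g : E → Euc m') (U : Set E) : Prop :=
  ∀ x ∈ U, ∀ X Y : E,
    ⟪fderiv ℝ f x X, fderiv ℝ f x Y⟫ = ⟪fderiv ℝ g x X, fderiv ℝ g x Y⟫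

/-- First normal space: span of the values of the second fundamental form. -/
def FirstNormal (f : E → Euc m) (x : E) : Submodule ℝ (Euc m) :=
  Submodule.span ℝ {v | ∃ X Y : E, v = sff f x X Y}

/-- `f` has rank two: the relative nullity has codimension two everywhere on `U`. -/
def HasRankTwo (f : E → Euc m) (U : Set E) : Prop :=
  ∀ x ∈ U, finrank ℝ (relNullity f x) = finrank ℝ E - 2

/-- A parabolic submanifold: rank two, first normal space equal to the normal space,
and a nowhere-vanishing smooth asymptotic vector field orthogonal to the relative nullity. -/
def IsParabolic (f : E → Euc m) (U : Set E) : Prop :=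
  IsImmersionOn f U ∧ HasRankTwo f U ∧
  (∀ x ∈ U, FirstNormal f x = NormalSp f x) ∧
  ∃ Z : E → E, ContDiffOn ℝ (⊤ : ℕ∞) Z U ∧ (∀ x ∈ U, Z x ≠ 0) ∧
    (∀ x ∈ U, ∀ T ∈ relNullity f x, ⟪fderiv ℝ f x (Z x), fderiv ℝ f x T⟫ = 0) ∧
    (∀ x ∈ U, sff f x (Z x) (Z x) = 0)

/-- `F` is ruled on `V`: there is a smooth corank-one distribution whose leaves are
mapped into affine subspaces. -/
def IsRuledOn (F : E → Euc m) (V : Set E) : Prop :=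
  ∃ D : E → Submodule ℝ E,
    (∀ x ∈ V, finrank ℝ (D x) = finrank ℝ E - 1) ∧
    (∀ x ∈ V, ∃ W : Set E, IsOpen W ∧ x ∈ W ∧ W ⊆ V ∧
      ∃ v : Fin (finrank ℝ E - 1) → E → E,
        (∀ i, ContDiffOn ℝ (⊤ : ℕ∞) (v i) W) ∧
        ∀ y ∈ W, D y = Submodule.span ℝ (Set.range fun i => v i y)) ∧
    (∀ S T : E → E, ContDiffOn ℝ (⊤ : ℕ∞) S V → ContDiffOn ℝ (⊤ : ℕ∞) T V →
      (∀ y ∈ V, S y ∈ D y) → (∀ y ∈ V, T y ∈ D y) →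
      ∀ x ∈ V, fderiv ℝ (fun y => fderiv ℝ F y (T y)) x (S x) ∈
        (D x).map (fderiv ℝ F x).toLinearMap)

/-- A two-dimensional immersed surface contained in the subspace `W`. -/
def IsImmersedSurfaceIn (S : Set (Euc m)) (W : Submodule ℝ (Euc m)) : Prop :=
  ∃ (O : Set (Euc 2)) (σ : Euc 2 → Euc m), IsOpen O ∧ ContDiffOn ℝ (⊤ : ℕ∞) σ O ∧
    (∀ x ∈ O, Function.Injective (fderiv ℝ σ x)) ∧ (∀ x ∈ O, σ x ∈ W) ∧ S = σ '' O

/-- `f` is surface-like on `V`. -/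
def SurfaceLikeOn {n : ℕ} (f : Euc n → Euc m) (V : Set (Euc n)) : Prop :=
  (∃ (W : Submodule ℝ (Euc m)) (p : Euc m) (S : Set (Euc m)),
      finrank ℝ W = 4 ∧ IsImmersedSurfaceIn S W ∧
      ∀ x ∈ V, ∃ s ∈ S, ∃ w ∈ Wᗮ, f x = p + s + w)
  ∨ (∃ (W : Submodule ℝ (Euc m)) (p : Euc m) (S : Set (Euc m)),
      finrank ℝ W = 5 ∧ IsImmersedSurfaceIn S W ∧ (∀ s ∈ S, ‖s‖ = 1) ∧
      ∀ x ∈ V, ∃ t : ℝ, 0 < t ∧ ∃ s ∈ S, ∃ w ∈ Wᗮ, f x = p + t • s + w)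

/-- `f` and `g` are congruent on `U` by a rigid motion of the ambient space. -/
def CongruentOn {n : ℕ} (f g : Euc n → Euc m) (U : Set (Euc n)) : Prop :=
  ∃ (A : Euc m ≃ₗᵢ[ℝ] Euc m) (v : Euc m), ∀ x ∈ U, g x = A (f x) + v

namespace ParAux

variable {n m : ℕ}

/-- Full second derivative. -/
def d2 (f : Euc n → Euc m) (x : Euc n) : Euc n →L[ℝ] Euc n →L[ℝ] Euc m :=
  fderiv ℝ (fderiv ℝ f) x

/-- Full third derivative. -/
def d3 (f : Euc n → Euc m) (x : Euc n) : Euc n →L[ℝ] Euc n →L[ℝ] Euc n →L[ℝ] Euc m :=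
  fderiv ℝ (d2 f) x

lemma diffAt {F : Type*} [NormedAddCommGroup F] [NormedSpace ℝ F]
    {U : Set (Euc n)} {φ : Euc n → F} {x : Euc n}
    (hU : IsOpen U) (hφ : ContDiffOn ℝ (⊤:ℕ∞) φ U) (hx : x ∈ U) :
    DifferentiableAt ℝ φ x :=
  (hφ.contDiffAt (hU.mem_nhds hx)).differentiableAt (by simp)

section Smooth

variable {U : Set (Euc n)} {f : Euc n → Euc m} {x : Euc n}

lemma cdOn_fderiv (hU : IsOpen U) (hf : ContDiffOn ℝ (⊤:ℕ∞) f U) :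
    ContDiffOn ℝ (⊤:ℕ∞) (fderiv ℝ f) U :=
  hf.fderiv_of_isOpen hU (by exact_mod_cast le_top)

lemma cdOn_d2 (hU : IsOpen U) (hf : ContDiffOn ℝ (⊤:ℕ∞) f U) :
    ContDiffOn ℝ (⊤:ℕ∞) (d2 f) U :=
  (cdOn_fderiv hU hf).fderiv_of_isOpen hU (by exact_mod_cast le_top)

variable (hU : IsOpen U) (hf : ContDiffOn ℝ (⊤:ℕ∞) f U) (hx : x ∈ U)
include hU hf hx

lemma hasFD_d2 : HasFDerivAt (fderiv ℝ f) (d2 f x) x :=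
  (diffAt hU (cdOn_fderiv hU hf) hx).hasFDerivAt

lemma hasFD_d3 : HasFDerivAt (d2 f) (d3 f x) x :=
  (diffAt hU (cdOn_d2 hU hf) hx).hasFDerivAt

lemma hasFD_fderiv_app (Y : Euc n) :
    HasFDerivAt (fun y => fderiv ℝ f y Y) ((d2 f x).flip Y) x := by
  simpa using (hasFD_d2 hU hf hx).clm_apply (hasFDerivAt_const Y x)

lemma fderiv_fderiv_app (Y : Euc n) :
    fderiv ℝ (fun y => fderiv ℝ f y Y) x = (d2 f x).flip Y :=
  (hasFD_fderiv_app hU hf hx Y).fderiv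

lemma hasFD_d2_app (W X : Euc n) :
    HasFDerivAt (fun y => d2 f y W X) (((d3 f x).flip W).flip X) x := by
  have h1 : HasFDerivAt (fun y => d2 f y W) ((d3 f x).flip W) x := by
    simpa using (hasFD_d3 hU hf hx).clm_apply (hasFDerivAt_const W x)
  simpa using h1.clm_apply (hasFDerivAt_const X x)

lemma sym2 (V W : Euc n) : d2 f x V W = d2 f x W V := by
  apply second_derivative_symmetric_of_eventually (f := f) (f' := fderiv ℝ f)
  · filter_upwards [hU.mem_nhds hx] with y hy
    exact (diffAt hU hf hy).hasFDerivAt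
  · exact hasFD_d2 hU hf hx

lemma sym3_12 (V W X : Euc n) : d3 f x V W X = d3 f x W V X := by
  have h : d3 f x V W = d3 f x W V := by
    apply second_derivative_symmetric_of_eventually (f := fderiv ℝ f) (f' := d2 f)
    · filter_upwards [hU.mem_nhds hx] with y hy
      exact (diffAt hU (cdOn_fderiv hU hf) hy).hasFDerivAt
    · exact hasFD_d3 hU hf hx
  rw [h]

lemma fderiv_d2_app (W X : Euc n) :
    fderiv ℝ (fun y => d2 f y W X) x = ((d3 f x).flip W).flip X :=
  (hasFD_d2_app hU hf hx W X).fderiv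

lemma sym3_23 (V W X : Euc n) : d3 f x V W X = d3 f x V X W := by
  have hE : (fun y => d2 f y W X) =ᶠ[nhds x] (fun y => d2 f y X W) := by
    filter_upwards [hU.mem_nhds hx] with y hy
    exact sym2 hU hf hy W X
  have := hE.fderiv_eq (𝕜 := ℝ)
  rw [fderiv_d2_app hU hf hx W X, fderiv_d2_app hU hf hx X W] at this
  exact DFunLike.congr_fun this V

lemma sym3_13 (V W X : Euc n) : d3 f x V W X = d3 f x X W V := by
  rw [sym3_23 hU hf hx V W X, sym3_12 hU hf hx V X W, sym3_23 hU hf hx X V W]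

end Smooth

end ParAux
namespace ParAux

section Proj
variable {n m : ℕ} {f : Euc n → Euc m} {x : Euc n}

lemma tangentProj_mem (v : Euc m) : tangentProj f x v ∈ TangentSp f x := by
  simp [tangentProj]

lemma normalProj_mem (v : Euc m) : normalProj f x v ∈ NormalSp f x := by
  simp [normalProj]

lemma inner_tangentProj_left (v w : Euc m) (hw : w ∈ TangentSp f x) :
    ⟪tangentProj f x v, w⟫ = ⟪v, w⟫ := by
  have hmem : v - tangentProj f x v ∈ (TangentSp f x)ᗮ :=
    (TangentSp f x).sub_starProjection_mem_orthogonal v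
  have h0 : ⟪v - tangentProj f x v, w⟫ = 0 :=
    (Submodule.mem_orthogonal' _ _).1 hmem w hw
  have := inner_sub_left (𝕜 := ℝ) v (tangentProj f x v) w
  simp only [h0] at this ⊢
  linarith [this]

lemma inner_tangentProj_right (v w : Euc m) (hv : v ∈ TangentSp f x) :
    ⟪v, tangentProj f x w⟫ = ⟪v, w⟫ := by
  rw [real_inner_comm, inner_tangentProj_left _ _ hv, real_inner_comm]

lemma normalProj_eq (v : Euc m) : normalProj f x v = v - tangentProj f x v := by
  have := (TangentSp f x).starProjection_add_starProjection_orthogonal v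
  simp only [normalProj, tangentProj, NormalSp, ContinuousLinearMap.coe_comp',
    Function.comp_apply, Submodule.coe_subtypeL', Submodule.coe_subtype,
    Submodule.starProjection_apply] at *
  rw [eq_sub_iff_add_eq, add_comm]
  exact this
end Proj
end ParAux
namespace ParAux

section Sff
variable {n m : ℕ} {U : Set (Euc n)} {f : Euc n → Euc m} {x : Euc n}

lemma mem_relNullity {T : Euc n} :
    T ∈ relNullity f x ↔ ∀ Y, sff f x T Y = 0 := by
  simp only [relNullity, Submodule.mem_iInf, LinearMap.mem_ker,
    ContinuousLinearMap.coe_coe, sff]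

lemma sff_add_left (X X' Y : Euc n) :
    sff f x (X + X') Y = sff f x X Y + sff f x X' Y := by
  simp [sff]

lemma sff_smul_left (a : ℝ) (X Y : Euc n) :
    sff f x (a • X) Y = a • sff f x X Y := by
  simp [sff]

variable (hU : IsOpen U) (hf : ContDiffOn ℝ (⊤:ℕ∞) f U) (hx : x ∈ U)
include hU hf hx

lemma sff_eq_d2 (X Y : Euc n) : sff f x X Y = normalProj f x (d2 f x X Y) := by
  simp only [sff, sffOp, ContinuousLinearMap.coe_comp', Function.comp_apply]
  rw [fderiv_fderiv_app hU hf hx Y]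
  simp

lemma sff_symm (X Y : Euc n) : sff f x X Y = sff f x Y X := by
  rw [sff_eq_d2 hU hf hx, sff_eq_d2 hU hf hx, sym2 hU hf hx]

lemma sff_add_right (X Y Y' : Euc n) :
    sff f x X (Y + Y') = sff f x X Y + sff f x X Y' := by
  rw [sff_eq_d2 hU hf hx, sff_eq_d2 hU hf hx, sff_eq_d2 hU hf hx]
  simp

lemma sff_smul_right (a : ℝ) (X Y : Euc n) :
    sff f x X (a • Y) = a • sff f x X Y := by
  rw [sff_eq_d2 hU hf hx, sff_eq_d2 hU hf hx]
  simp

lemma sff_expand_right (X : Euc n) {d' : Euc n} (hd' : d' ∈ relNullity f x)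
    (a' b' : ℝ) (z w : Euc n) :
    sff f x X (d' + a' • z + b' • w) = a' • sff f x X z + b' • sff f x X w := by
  rw [sff_add_right hU hf hx, sff_add_right hU hf hx, sff_smul_right hU hf hx,
    sff_smul_right hU hf hx]
  have h0 : sff f x X d' = 0 := by
    rw [sff_symm hU hf hx]; exact mem_relNullity.1 hd' X
  rw [h0, zero_add]

lemma sff_mem_normal (X Y : Euc n) : sff f x X Y ∈ NormalSp f x := by
  rw [sff_eq_d2 hU hf hx]; exact normalProj_mem _

end Sff
end ParAux
namespace ParAux

section Gauss
variable {n m m' : ℕ} {U : Set (Euc n)} {f : Euc n → Euc m} {g : Euc n → Euc m'} {x : Euc n}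
variable (hU : IsOpen U) (hf : ContDiffOn ℝ (⊤:ℕ∞) f U) (hg : ContDiffOn ℝ (⊤:ℕ∞) g U)
  (hiso : SameMetricOn f g U)
include hU hf hg hiso

lemma metric_d1 (hx : x ∈ U) (W X Y : Euc n) :
    ⟪fderiv ℝ f x X, d2 f x W Y⟫ + ⟪d2 f x W X, fderiv ℝ f x Y⟫ =
    ⟪fderiv ℝ g x X, d2 g x W Y⟫ + ⟪d2 g x W X, fderiv ℝ g x Y⟫ := by
  have hE : (fun y => ⟪fderiv ℝ f y X, fderiv ℝ f y Y⟫) =ᶠ[nhds x]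
      (fun y => ⟪fderiv ℝ g y X, fderiv ℝ g y Y⟫) := by
    filter_upwards [hU.mem_nhds hx] with y hy
    exact hiso y hy X Y
  have h := DFunLike.congr_fun (hE.fderiv_eq (𝕜 := ℝ)) W
  rw [fderiv_inner_apply (𝕜 := ℝ) ((hasFD_fderiv_app hU hf hx X).differentiableAt)
        ((hasFD_fderiv_app hU hf hx Y).differentiableAt) W,
      fderiv_inner_apply (𝕜 := ℝ) ((hasFD_fderiv_app hU hg hx X).differentiableAt)
        ((hasFD_fderiv_app hU hg hx Y).differentiableAt) W,
      fderiv_fderiv_app hU hf hx X, fderiv_fderiv_app hU hf hx Y,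
      fderiv_fderiv_app hU hg hx X, fderiv_fderiv_app hU hg hx Y] at h
  simpa using h

lemma christoffel (hx : x ∈ U) (W X Y : Euc n) :
    ⟪d2 f x W X, fderiv ℝ f x Y⟫ = ⟪d2 g x W X, fderiv ℝ g x Y⟫ := by
  set P : Euc n → Euc n → Euc n → ℝ :=
    fun a b c => ⟪d2 f x a b, fderiv ℝ f x c⟫ - ⟪d2 g x a b, fderiv ℝ g x c⟫ with hP
  have hS : ∀ a b c, P a b c + P a c b = 0 := by
    intro a b c
    have h := metric_d1 hU hf hg hiso hx a b c
    simp only [hP]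
    linarith [h, real_inner_comm (fderiv ℝ f x b) (d2 f x a c),
      real_inner_comm (fderiv ℝ g x b) (d2 g x a c)]
  have hsym : ∀ a b c, P a b c = P b a c := by
    intro a b c
    simp only [hP, sym2 hU hf hx a b, sym2 hU hg hx a b]
  have : P W X Y = 0 := by
    have h1 := hS W X Y
    have h2 := hS Y W X
    have h3 := hS X Y W
    have s1 := hsym W Y X
    have s2 := hsym Y X W
    have s3 := hsym X W Y
    linarith
  simpa [hP] using sub_eq_zero.mp this

lemma metric_d2 (hx : x ∈ U) (V W X Y : Euc n) :
    ⟪d2 f x W X, d2 f x V Y⟫ + ⟪d3 f x V W X, fderiv ℝ f x Y⟫ =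
    ⟪d2 g x W X, d2 g x V Y⟫ + ⟪d3 g x V W X, fderiv ℝ g x Y⟫ := by
  have hE : (fun y => ⟪d2 f y W X, fderiv ℝ f y Y⟫) =ᶠ[nhds x]
      (fun y => ⟪d2 g y W X, fderiv ℝ g y Y⟫) := by
    filter_upwards [hU.mem_nhds hx] with y hy
    exact christoffel hU hf hg hiso hy W X Y
  have h := DFunLike.congr_fun (hE.fderiv_eq (𝕜 := ℝ)) V
  rw [fderiv_inner_apply (𝕜 := ℝ) ((hasFD_d2_app hU hf hx W X).differentiableAt)
        ((hasFD_fderiv_app hU hf hx Y).differentiableAt) V,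
      fderiv_inner_apply (𝕜 := ℝ) ((hasFD_d2_app hU hg hx W X).differentiableAt)
        ((hasFD_fderiv_app hU hg hx Y).differentiableAt) V,
      fderiv_fderiv_app hU hf hx Y, fderiv_fderiv_app hU hg hx Y,
      fderiv_d2_app hU hf hx W X, fderiv_d2_app hU hg hx W X] at h
  simpa using h

lemma gauss_d2 (hx : x ∈ U) (V W X Y : Euc n) :
    ⟪d2 f x W X, d2 f x V Y⟫ - ⟪d2 f x W V, d2 f x X Y⟫ =
    ⟪d2 g x W X, d2 g x V Y⟫ - ⟪d2 g x W V, d2 g x X Y⟫ := by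
  have h1 := metric_d2 hU hf hg hiso hx V W X Y
  have h2 := metric_d2 hU hf hg hiso hx X W V Y
  rw [sym3_13 hU hf hx X W V, sym3_13 hU hg hx X W V] at h2
  linarith [h1, h2]

end Gauss
end ParAux
namespace ParAux

section Sff2
variable {n m : ℕ} {U : Set (Euc n)} {f : Euc n → Euc m} {x : Euc n}
variable (hU : IsOpen U) (hf : ContDiffOn ℝ (⊤:ℕ∞) f U) (hx : x ∈ U)
include hU hf hx

lemma inner_sff (W X V Y : Euc n) :
    ⟪sff f x W X, sff f x V Y⟫ = ⟪d2 f x W X, d2 f x V Y⟫ -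
      ⟪tangentProj f x (d2 f x W X), tangentProj f x (d2 f x V Y)⟫ := by
  rw [sff_eq_d2 hU hf hx, sff_eq_d2 hU hf hx, normalProj_eq, normalProj_eq,
    inner_sub_left, inner_sub_right, inner_sub_right]
  have e1 : ⟪tangentProj f x (d2 f x W X), tangentProj f x (d2 f x V Y)⟫
      = ⟪d2 f x W X, tangentProj f x (d2 f x V Y)⟫ :=
    inner_tangentProj_left _ _ (tangentProj_mem _)
  have e2 : ⟪tangentProj f x (d2 f x W X), tangentProj f x (d2 f x V Y)⟫
      = ⟪tangentProj f x (d2 f x W X), d2 f x V Y⟫ :=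
    inner_tangentProj_right _ _ (tangentProj_mem _)
  linarith [e1, e2]

end Sff2

section Gauss2
variable {n m m' : ℕ} {U : Set (Euc n)} {f : Euc n → Euc m} {g : Euc n → Euc m'} {x : Euc n}
variable (hU : IsOpen U) (hf : ContDiffOn ℝ (⊤:ℕ∞) f U) (hg : ContDiffOn ℝ (⊤:ℕ∞) g U)
  (hiso : SameMetricOn f g U)
include hU hf hg hiso

lemma tangent_eq (hx : x ∈ U) (V W X Y : Euc n) :
    ⟪tangentProj f x (d2 f x W X), tangentProj f x (d2 f x V Y)⟫ =
    ⟪tangentProj g x (d2 g x W X), tangentProj g x (d2 g x V Y)⟫ := by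
  obtain ⟨u, hu⟩ : ∃ u, fderiv ℝ f x u = tangentProj f x (d2 f x V Y) :=
    tangentProj_mem _
  have key : fderiv ℝ g x u = tangentProj g x (d2 g x V Y) := by
    set a := fderiv ℝ g x u - tangentProj g x (d2 g x V Y) with ha
    have hmem : a ∈ TangentSp g x :=
      sub_mem ⟨u, rfl⟩ (tangentProj_mem _)
    have horth : ∀ w ∈ TangentSp g x, ⟪a, w⟫ = 0 := by
      rintro w ⟨Y', rfl⟩
      rw [ha, inner_sub_left]
      simp only [ContinuousLinearMap.coe_coe]
      have e1 : ⟪fderiv ℝ g x u, fderiv ℝ g x Y'⟫ = ⟪fderiv ℝ f x u, fderiv ℝ f x Y'⟫ :=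
        (hiso x hx u Y').symm
      have e2 : ⟪tangentProj g x (d2 g x V Y), fderiv ℝ g x Y'⟫
          = ⟪d2 g x V Y, fderiv ℝ g x Y'⟫ :=
        inner_tangentProj_left _ _ ⟨Y', rfl⟩
      have e3 : ⟪fderiv ℝ f x u, fderiv ℝ f x Y'⟫ = ⟪d2 f x V Y, fderiv ℝ f x Y'⟫ := by
        rw [hu]; exact inner_tangentProj_left _ _ ⟨Y', rfl⟩
      rw [e1, e2, e3, christoffel hU hf hg hiso hx V Y Y']
      ring
    have h0 : ⟪a, a⟫ = 0 := horth a hmem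
    have := inner_self_eq_zero (𝕜 := ℝ).1 h0
    exact sub_eq_zero.mp this
  calc ⟪tangentProj f x (d2 f x W X), tangentProj f x (d2 f x V Y)⟫
      = ⟪tangentProj f x (d2 f x W X), fderiv ℝ f x u⟫ := by rw [hu]
    _ = ⟪d2 f x W X, fderiv ℝ f x u⟫ :=
        inner_tangentProj_left _ _ ⟨u, rfl⟩
    _ = ⟪d2 g x W X, fderiv ℝ g x u⟫ := christoffel hU hf hg hiso hx W X u
    _ = ⟪tangentProj g x (d2 g x W X), fderiv ℝ g x u⟫ :=
        (inner_tangentProj_left _ _ ⟨u, rfl⟩).symm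
    _ = ⟪tangentProj g x (d2 g x W X), tangentProj g x (d2 g x V Y)⟫ := by rw [key]

lemma gauss_sff (hx : x ∈ U) (V W X Y : Euc n) :
    ⟪sff f x W X, sff f x V Y⟫ - ⟪sff f x W V, sff f x X Y⟫ =
    ⟪sff g x W X, sff g x V Y⟫ - ⟪sff g x W V, sff g x X Y⟫ := by
  have i1 := inner_sff hU hf hx W X V Y
  have i2 := inner_sff hU hf hx W V X Y
  have i3 := inner_sff hU hg hx W X V Y
  have i4 := inner_sff hU hg hx W V X Y
  have t1 := tangent_eq hU hf hg hiso hx V W X Y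
  have t2 := tangent_eq hU hf hg hiso hx X W V Y
  have g1 := gauss_d2 hU hf hg hiso hx V W X Y
  linarith

end Gauss2
end ParAux
namespace ParAux

section Point
variable {n m : ℕ} {f : Euc n → Euc m} {x : Euc n}

lemma finrank_tangent (hinj : Function.Injective (fderiv ℝ f x)) :
    finrank ℝ (TangentSp f x) = n := by
  have h : Function.Injective (fderiv ℝ f x).toLinearMap := hinj
  rw [TangentSp, LinearMap.finrank_range_of_inj h, finrank_euclideanSpace_fin]

lemma finrank_normal_add (hinj : Function.Injective (fderiv ℝ f x)) :
    n + finrank ℝ (NormalSp f x) = m := by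
  have h := Submodule.finrank_add_finrank_orthogonal (K := TangentSp f x)
  rw [finrank_tangent hinj, finrank_euclideanSpace_fin] at h
  exact h

lemma exists_decomp {Δ : Submodule ℝ (Euc n)} {z : Euc n}
    (hn : 3 ≤ n) (hΔ : finrank ℝ Δ = n - 2) (hz : z ∉ Δ) :
    ∃ w : Euc n, w ∉ Δ ⊔ (ℝ ∙ z) ∧
      ∀ T : Euc n, ∃ (d : Euc n) (a b : ℝ), d ∈ Δ ∧ T = d + a • z + b • w := by
  have hz0 : z ≠ 0 := fun h => hz (h ▸ Δ.zero_mem)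
  set K := Δ ⊔ (ℝ ∙ z) with hK
  have hKlt : Δ < K := by
    refine lt_of_le_of_ne le_sup_left (fun h => hz ?_)
    rw [h, hK]
    exact Submodule.mem_sup_right (Submodule.mem_span_singleton_self z)
  have hKfin : finrank ℝ K ≤ n - 1 := by
    have h1 := Submodule.finrank_sup_add_finrank_inf_eq Δ (ℝ ∙ z)
    have h2 : finrank ℝ (ℝ ∙ z) = 1 := finrank_span_singleton hz0
    rw [← hK] at h1
    omega
  have hKne : K ≠ ⊤ := by
    intro h
    rw [h, finrank_top, finrank_euclideanSpace_fin] at hKfin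
    omega
  obtain ⟨w, hw⟩ : ∃ w, w ∉ K := by
    by_contra h
    push_neg at h
    exact hKne (Submodule.eq_top_iff'.2 h)
  refine ⟨w, hw, ?_⟩
  set K' := K ⊔ (ℝ ∙ w) with hK'
  have hK'top : K' = ⊤ := by
    have hlt : K < K' := by
      refine lt_of_le_of_ne le_sup_left (fun h => hw ?_)
      rw [h]
      exact Submodule.mem_sup_right (Submodule.mem_span_singleton_self w)
    have l1 : finrank ℝ Δ < finrank ℝ K := Submodule.finrank_lt_finrank_of_lt hKlt
    have l2 : finrank ℝ K < finrank ℝ K' := Submodule.finrank_lt_finrank_of_lt hlt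
    have l3 : finrank ℝ K' ≤ n := by
      have := Submodule.finrank_le K'
      rwa [finrank_euclideanSpace_fin] at this
    apply Submodule.eq_top_of_finrank_eq
    rw [finrank_euclideanSpace_fin]
    omega
  intro T
  have hT : T ∈ K' := by rw [hK'top]; trivial
  obtain ⟨yk, hyk, yw, hyw, rfl⟩ := Submodule.mem_sup.1 hT
  obtain ⟨d, hd, yz, hyz, rfl⟩ := Submodule.mem_sup.1 hyk
  obtain ⟨a, rfl⟩ := (Submodule.mem_span_singleton (R := ℝ)).1 hyz
  obtain ⟨b, rfl⟩ := (Submodule.mem_span_singleton (R := ℝ)).1 hyw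
  exact ⟨d, a, b, hd, rfl⟩

end Point
end ParAux
open ParAux

/-- The relative nullity spaces of a parabolic submanifold and of any
isometric hypersurface immersion coincide. -/
theorem relNullity_eq_of_isometric_hypersurface
    {n : ℕ} (hn : 3 ≤ n) (U : Set (Euc n)) (hUo : IsOpen U)
    (f : Euc n → Euc (n + 2)) (hf : IsParabolic f U)
    (g : Euc n → Euc (n + 1)) (hg : IsImmersionOn g U) (hiso : SameMetricOn f g U) :
    ∀ x ∈ U, relNullity g x = relNullity f x := by
  obtain ⟨⟨hfs, hfinj⟩, hrk2, hfn, Z, hZs, hZne, hZorth, hZasym⟩ := hf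
  obtain ⟨hgs, hginj⟩ := hg
  intro x hx
  have hsymf : ∀ X Y : Euc n, sff f x X Y = sff f x Y X :=
    fun X Y => sff_symm hUo hfs hx X Y
  have hsymg : ∀ X Y : Euc n, sff g x X Y = sff g x Y X :=
    fun X Y => sff_symm hUo hgs hx X Y
  have hG := gauss_sff hUo hfs hgs hiso hx
  set z := Z x with hzdef
  have hzz : sff f x z z = 0 := hZasym x hx
  have hzΔ : z ∉ relNullity f x := by
    intro h
    have h0 := hZorth x hx z h
    have hz0 : fderiv ℝ f x z = 0 := by
      rwa [inner_self_eq_zero (𝕜 := ℝ)] at h0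
    refine hZne x hx (hfinj x hx ?_)
    rw [hz0, map_zero]
  have hΔfin : finrank ℝ (relNullity f x) = n - 2 := by
    have := hrk2 x hx
    rwa [finrank_euclideanSpace_fin] at this
  obtain ⟨w, hwK, hdecomp⟩ := exists_decomp hn hΔfin hzΔ
  have hzw : sff f x z w ≠ 0 := by
    intro h0
    have hwz : sff f x w z = 0 := by rw [hsymf]; exact h0
    have hsub : FirstNormal f x ≤ ℝ ∙ (sff f x w w) := by
      rw [FirstNormal, Submodule.span_le]
      rintro v ⟨X, Y, rfl⟩
      obtain ⟨d, a, b, hd, rfl⟩ := hdecomp X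
      obtain ⟨d', a', b', hd', rfl⟩ := hdecomp Y
      have e1 : sff f x (d + a • z + b • w) (d' + a' • z + b' • w)
          = a • sff f x z (d' + a' • z + b' • w) + b • sff f x w (d' + a' • z + b' • w) := by
        rw [sff_add_left, sff_add_left, sff_smul_left, sff_smul_left,
          mem_relNullity.1 hd, zero_add]
      have e2 : a • ((a' : ℝ) • (0 : Euc (n+2)) + b' • (0 : Euc (n+2)))
          + b • (a' • (0 : Euc (n+2)) + b' • sff f x w w) = (b * b') • sff f x w w := by
        module
      rw [SetLike.mem_coe, e1, sff_expand_right hUo hfs hx z hd',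
        sff_expand_right hUo hfs hx w hd', hzz, h0, hwz, e2]
      exact Submodule.mem_span_singleton.2 ⟨b * b', rfl⟩
    have hN2 : finrank ℝ (NormalSp f x) = 2 := by
      have := finrank_normal_add (hfinj x hx)
      omega
    have hle1 : finrank ℝ (FirstNormal f x) ≤ 1 := by
      refine le_trans (Submodule.finrank_mono hsub) ?_
      by_cases hww : sff f x w w = 0
      · rw [hww, Submodule.span_zero_singleton]
        simp
      · rw [finrank_span_singleton hww]
    rw [hfn x hx, hN2] at hle1
    omega
  have hαexp : ∀ (X : Euc n) {d' : Euc n}, d' ∈ relNullity f x → ∀ a' b' : ℝ,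
      sff f x X (d' + a' • z + b' • w) = a' • sff f x X z + b' • sff f x X w :=
    fun X _ hd' a' b' => sff_expand_right hUo hfs hx X hd' a' b' z w
  ext T
  constructor
  · intro hT
    have hβ : ∀ V, sff g x V T = 0 := by
      intro V
      rw [hsymg]; exact mem_relNullity.1 hT V
    have hG1 : ∀ W X V : Euc n,
        ⟪sff f x W X, sff f x V T⟫ = ⟪sff f x W V, sff f x X T⟫ := by
      intro W X V
      have h := hG V W X T
      rw [hβ V, hβ X, inner_zero_right, inner_zero_right] at h
      linarith
    have hzT : sff f x z T = 0 := by
      have h := hG1 z T z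
      rw [hzz, inner_zero_left] at h
      exact (inner_self_eq_zero (𝕜 := ℝ)).1 h
    obtain ⟨d, a, b, hd, hTeq⟩ := hdecomp T
    have hb : b = 0 := by
      have e := hαexp z hd a b
      rw [← hTeq, hzT, hzz, smul_zero, zero_add] at e
      rcases smul_eq_zero.1 e.symm with h | h
      · exact h
      · exact absurd h hzw
    have ha : a = 0 := by
      have h := hG1 w z w
      rw [hzT, inner_zero_right] at h
      have e := hαexp w hd a b
      rw [← hTeq, hb, zero_smul, add_zero] at e
      rw [e, real_inner_smul_right] at h
      have hwz : sff f x w z ≠ 0 := by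
        rw [hsymf]; exact hzw
      have hne : ⟪sff f x w z, sff f x w z⟫ ≠ 0 := by
        intro hcon
        exact hwz ((inner_self_eq_zero (𝕜 := ℝ)).1 hcon)
      rcases mul_eq_zero.1 h with h' | h'
      · exact h'
      · exact absurd h' hne
    rw [hb, ha] at hTeq
    simp only [zero_smul, add_zero] at hTeq
    rw [hTeq]
    exact hd
  · intro hT
    have hα : ∀ V, sff f x V T = 0 := by
      intro V
      rw [hsymf]; exact mem_relNullity.1 hT V
    rw [mem_relNullity]
    by_contra hcon
    push_neg at hcon
    obtain ⟨Y₀, hY₀⟩ := hcon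
    set ν := sff g x T Y₀ with hν
    have hNg1 : finrank ℝ (NormalSp g x) = 1 := by
      have := finrank_normal_add (hginj x hx)
      omega
    have hspan : (ℝ ∙ ν) = NormalSp g x := by
      refine Submodule.eq_of_le_of_finrank_le ?_ ?_
      · rw [Submodule.span_le, Set.singleton_subset_iff]
        exact sff_mem_normal hUo hgs hx T Y₀
      · rw [finrank_span_singleton hY₀, hNg1]
    have hcc : ∀ X Y : Euc n, ∃ c : ℝ, sff g x X Y = c • ν := by
      intro X Y
      have hmem := sff_mem_normal hUo hgs hx X Y
      rw [← hspan] at hmem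
      obtain ⟨c, hc⟩ := Submodule.mem_span_singleton.1 hmem
      exact ⟨c, hc.symm⟩
    choose c hc using hcc
    have hνν : ⟪ν, ν⟫ ≠ 0 := by
      intro h
      exact hY₀ ((inner_self_eq_zero (𝕜 := ℝ)).1 h)
    have hinj : Function.Injective (fun t : ℝ => t • ν) := smul_left_injective ℝ hY₀
    have hcsym : ∀ X Y, c X Y = c Y X := by
      intro X Y
      apply hinj
      simp only
      rw [← hc X Y, ← hc Y X]
      exact hsymg X Y
    have hcT : c T Y₀ = 1 := by
      apply hinj
      simp only
      rw [← hc T Y₀, one_smul]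
    have hprod : ∀ W X V Y : Euc n,
        ⟪sff g x W X, sff g x V Y⟫ = c W X * c V Y * ⟪ν, ν⟫ := by
      intro W X V Y
      rw [hc W X, hc V Y, real_inner_smul_left, real_inner_smul_right]
      ring
    have step1 : ∀ W X V : Euc n, c W X * c V T = c W V * c X T := by
      intro W X V
      have h := hG V W X T
      rw [hα V, hα X, inner_zero_right, inner_zero_right,
        hprod W X V T, hprod W V X T] at h
      have h' : (c W X * c V T - c W V * c X T) * ⟪ν, ν⟫ = 0 := by linarith
      rcases mul_eq_zero.1 h' with h'' | h''
      · linarith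
      · exact absurd h'' hνν
    have hfact : ∀ W X : Euc n, c W X = c W Y₀ * c X T := by
      intro W X
      have h := step1 W X Y₀
      rw [hcsym Y₀ T, hcT, mul_one] at h
      exact h
    have e5 : ∀ X V : Euc n, c X Y₀ * c V T = c V Y₀ * c X T := by
      intro X V
      rw [← hfact X V, ← hfact V X]
      exact hcsym X V
    have hflat : ∀ V W X Y : Euc n, c W X * c V Y = c W V * c X Y := by
      intro V W X Y
      rw [hfact W X, hfact V Y, hfact W V, hfact X Y]
      linear_combination (-(c W Y₀ * c Y T)) * e5 X V
    have hαflat : ∀ V W X Y : Euc n,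
        ⟪sff f x W X, sff f x V Y⟫ = ⟪sff f x W V, sff f x X Y⟫ := by
      intro V W X Y
      have h := hG V W X Y
      rw [hprod W X V Y, hprod W V X Y, hflat V W X Y] at h
      linarith
    have hzmem : z ∈ relNullity f x := by
      rw [mem_relNullity]
      intro Y
      have h := hαflat Y Y z z
      rw [hzz, inner_zero_right] at h
      have h0 : sff f x Y z = 0 := (inner_self_eq_zero (𝕜 := ℝ)).1 h
      rw [hsymf]
      exact h0
    exact hzΔ hzmem

end
end

section
/- Let a, b, c ∈ ℝ with b ≠ 0 and c ≠ 0, and let A₁ := !![a, b; b, 0] and A₂ := !![c, 0; 0, 0]. Then for (x, y) ∈ ℝ² with x² + y² = 1, the matrix x·A₁ + y·A₂ has rank ≤ 1 if and only if (x, y) = (0, 1) or (x, y) = (0, −1), and in those cases its rank equals 1. -/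
open Matrix

lemma diag_helper (t : ℝ) :
    (!![t, 0; 0, 0] : Matrix (Fin 2) (Fin 2) ℝ) = Matrix.diagonal ![t, 0] := by
  ext i j
  fin_cases i <;> fin_cases j <;> simp [Matrix.diagonal]

lemma rank_diag_one (t : ℝ) (ht : t ≠ 0) :
    (!![t, 0; 0, 0] : Matrix (Fin 2) (Fin 2) ℝ).rank = 1 := by
  classical
  rw [diag_helper, Matrix.rank_diagonal]
  rw [Fintype.card_eq_one_iff]
  refine ⟨⟨0, by simp [ht]⟩, ?_⟩
  rintro ⟨i, hi⟩
  apply Subtype.ext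
  fin_cases i
  · rfl
  · simp at hi

/-- For the shape operators `A₁ = !![a, b; b, 0]` (`b ≠ 0`) and
`A₂ = !![c, 0; 0, 0]` (`c ≠ 0`), a unit combination `x • A₁ + y • A₂` has rank at most one
exactly when `(x, y) = (0, ±1)`, and in those cases its rank equals one. -/
theorem rank_one_normal_direction_unique
    (a b c : ℝ) (hb : b ≠ 0) (hc : c ≠ 0) (x y : ℝ) (hxy : x ^ 2 + y ^ 2 = 1) :
    ((x • (!![a, b; b, 0] : Matrix (Fin 2) (Fin 2) ℝ) +
        y • (!![c, 0; 0, 0] : Matrix (Fin 2) (Fin 2) ℝ)).rank ≤ 1 ↔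
      (x = 0 ∧ y = 1) ∨ (x = 0 ∧ y = -1)) ∧
    (((x = 0 ∧ y = 1) ∨ (x = 0 ∧ y = -1)) →
      (x • (!![a, b; b, 0] : Matrix (Fin 2) (Fin 2) ℝ) +
        y • (!![c, 0; 0, 0] : Matrix (Fin 2) (Fin 2) ℝ)).rank = 1) := by
  set M : Matrix (Fin 2) (Fin 2) ℝ :=
    x • (!![a, b; b, 0] : Matrix (Fin 2) (Fin 2) ℝ) +
      y • (!![c, 0; 0, 0] : Matrix (Fin 2) (Fin 2) ℝ) with hM
  have hMeq : M = !![x * a + y * c, x * b; x * b, 0] := by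
    ext i j
    fin_cases i <;> fin_cases j <;> simp [hM, Matrix.smul_apply]
  have hrank1 : ((x = 0 ∧ y = 1) ∨ (x = 0 ∧ y = -1)) → M.rank = 1 := by
    rintro (⟨hx, hy⟩ | ⟨hx, hy⟩) <;>
    · rw [hMeq]
      subst hx hy
      norm_num
      exact rank_diag_one _ (by simpa using hc)
  refine ⟨⟨fun hle => ?_, fun h => (hrank1 h).le⟩, hrank1⟩
  by_cases hx : x = 0
  · subst hx
    have : (y - 1) * (y + 1) = 0 := by nlinarith
    rcases mul_eq_zero.mp this with h | h
    · exact Or.inl ⟨rfl, by linarith⟩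
    · exact Or.inr ⟨rfl, by linarith⟩
  · exfalso
    have hdet : M.det ≠ 0 := by
      rw [hMeq, Matrix.det_fin_two_of]
      intro h
      have : x * b = 0 := by nlinarith
      exact (mul_ne_zero hx hb) this
    have hunit : IsUnit M := by
      rw [Matrix.isUnit_iff_isUnit_det]
      exact isUnit_iff_ne_zero.mpr hdet
    have := Matrix.rank_of_isUnit M hunit
    rw [this] at hle
    simp [Fintype.card_fin] at hle
end

section
/- Let k ≥ 1, let C : ℝ → Matrix (Fin k) (Fin k) ℝ be continuous, and let A : ℝ → Matrix (Fin k) (Fin k) ℝ be differentiable with A'(t) = A(t)·C(t) for every t ∈ ℝ. Then the rank of A(t) is constant in t: rank A(t) = rank A(0) for all t ∈ ℝ. -/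
open Set Matrix

/-- Key uniqueness lemma: if a left null vector of `A` at time `t₀`, stays a left null
vector at all times. -/
lemma vecMul_eq_zero_along_ODE {k : ℕ} (C A : ℝ → Matrix (Fin k) (Fin k) ℝ)
    (hC : ∀ i j : Fin k, Continuous fun t => C t i j)
    (hA : ∀ t : ℝ, ∀ i j : Fin k, HasDerivAt (fun s => A s i j) ((A t * C t) i j) t)
    (x : Fin k → ℝ) (t₀ t₁ : ℝ) (h : x ᵥ* A t₀ = 0) : x ᵥ* A t₁ = 0 := by
  set a : ℝ := min t₀ t₁ - 1 with ha
  set b : ℝ := max t₀ t₁ + 1 with hb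
  have hab : a ≤ b := by
    have := min_le_max (a := t₀) (b := t₁); simp only [ha, hb]; linarith
  -- bound on the entries of C on [a,b]
  have hgcont : Continuous (fun t => fun p : Fin k × Fin k => C t p.1 p.2) :=
    continuous_pi fun p => hC p.1 p.2
  obtain ⟨M, hM⟩ := (isCompact_Icc (a := a) (b := b)).exists_bound_of_continuousOn
    hgcont.continuousOn
  have hM0 : 0 ≤ M := le_trans (norm_nonneg _) (hM a (left_mem_Icc.2 hab))
  have hMij : ∀ t ∈ Icc a b, ∀ i j : Fin k, |C t i j| ≤ M := by
    intro t ht i j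
    calc |C t i j| = ‖(fun p : Fin k × Fin k => C t p.1 p.2) (i, j)‖ := rfl
      _ ≤ ‖fun p : Fin k × Fin k => C t p.1 p.2‖ :=
          norm_le_pi_norm (fun p : Fin k × Fin k => C t p.1 p.2) (i, j)
      _ ≤ M := hM t ht
  -- the (time-clamped) vector field
  set v : ℝ → (Fin k → ℝ) → (Fin k → ℝ) :=
    fun t y => y ᵥ* C (projIcc a b hab t) with hv
  set K : NNReal := ⟨k * M, by positivity⟩ with hK
  have hlip : ∀ t : ℝ, LipschitzWith K (v t) := by
    intro t
    apply LipschitzWith.of_dist_le_mul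
    intro y z
    have hKnn : (0 : ℝ) ≤ (K : ℝ) * dist y z := by positivity
    rw [dist_pi_le_iff hKnn]
    intro j
    have hCmem : (projIcc a b hab t : ℝ) ∈ Icc a b := (projIcc a b hab t).2
    rw [Real.dist_eq]
    have : v t y j - v t z j = ∑ i, (y i - z i) * C (projIcc a b hab t) i j := by
      simp [hv, Matrix.vecMul, dotProduct, sub_mul, Finset.sum_sub_distrib]
    rw [this]
    calc |∑ i, (y i - z i) * C (projIcc a b hab t) i j|
        ≤ ∑ i, |(y i - z i) * C (projIcc a b hab t) i j| := Finset.abs_sum_le_sum_abs _ _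
      _ ≤ ∑ _i : Fin k, dist y z * M := by
          apply Finset.sum_le_sum
          intro i _
          rw [abs_mul]
          have h1 : |y i - z i| ≤ dist y z := by
            rw [← Real.dist_eq]; exact dist_le_pi_dist y z i
          exact mul_le_mul h1 (hMij _ hCmem i j) (abs_nonneg _) dist_nonneg
      _ = (K : ℝ) * dist y z := by
          simp [hK, Finset.sum_const]; change _ = ((k : ℝ) * M) * dist y z; ring
  -- the solution f t = x ᵥ* A t
  set f : ℝ → (Fin k → ℝ) := fun t => x ᵥ* A t with hf
  have hf' : ∀ t : ℝ, HasDerivAt f (x ᵥ* (A t * C t)) t := by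
    intro t
    rw [hasDerivAt_pi]
    intro j
    show HasDerivAt (fun s => ∑ i, x i * A s i j) (∑ i, x i * (A t * C t) i j) t
    exact HasDerivAt.fun_sum fun i _ => (hA t i j).const_mul (x i)
  have hderiv : ∀ t ∈ Ioo a b, HasDerivAt f (v t (f t)) t := by
    intro t ht
    have hproj : projIcc a b hab t = ⟨t, Ioo_subset_Icc_self ht⟩ :=
      projIcc_of_mem hab (Ioo_subset_Icc_self ht)
    have : v t (f t) = x ᵥ* (A t * C t) := by
      simp [hv, hproj, hf, Matrix.vecMul_vecMul]
    rw [this]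
    exact hf' t
  -- zero is also a solution
  have hzero : ∀ t ∈ Ioo a b, HasDerivAt (fun _ : ℝ => (0 : Fin k → ℝ)) (v t 0) t := by
    intro t _
    have : v t (0 : Fin k → ℝ) = 0 := by simp [hv]
    rw [this]
    exact hasDerivAt_const _ _
  have ht₀ : t₀ ∈ Ioo a b := by
    constructor
    · have := min_le_left t₀ t₁; simp only [ha]; linarith
    · have := le_max_left t₀ t₁; simp only [hb]; linarith
  have ht₁ : t₁ ∈ Icc a b := by
    constructor
    · have := min_le_right t₀ t₁; simp only [ha]; linarith
    · have := le_max_right t₀ t₁; simp only [hb]; linarith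
  have := ODE_solution_unique_of_mem_Icc (v := v) (s := fun _ => univ) (K := K)
    (fun t _ => (hlip t).lipschitzOnWith) ht₀
    (fun t ht => ((hf' t).continuousAt).continuousWithinAt)
    hderiv (fun _ _ => mem_univ _)
    continuousOn_const hzero (fun _ _ => mem_univ _) h
  exact this ht₁

/-- If a matrix-valued function `A` solves the linear ODE
`A' = A * C` with continuous coefficient `C`, then the rank of `A(t)` is constant. -/
theorem rank_constant_along_linear_ODE
    {k : ℕ} (hk : 1 ≤ k) (C A : ℝ → Matrix (Fin k) (Fin k) ℝ)
    (hC : ∀ i j : Fin k, Continuous fun t => C t i j)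
    (hA : ∀ t : ℝ, ∀ i j : Fin k, HasDerivAt (fun s => A s i j) ((A t * C t) i j) t) :
    ∀ t : ℝ, (A t).rank = (A 0).rank := by
  intro t
  have hker : LinearMap.ker (Matrix.mulVecLin (A t)ᵀ) =
      LinearMap.ker (Matrix.mulVecLin (A 0)ᵀ) := by
    ext x
    simp only [LinearMap.mem_ker, Matrix.mulVecLin_apply, Matrix.mulVec_transpose]
    constructor
    · exact fun h => vecMul_eq_zero_along_ODE C A hC hA x t 0 h
    · exact fun h => vecMul_eq_zero_along_ODE C A hC hA x 0 t h
  have h1 := LinearMap.finrank_range_add_finrank_ker (Matrix.mulVecLin (A t)ᵀ)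
  have h2 := LinearMap.finrank_range_add_finrank_ker (Matrix.mulVecLin (A 0)ᵀ)
  rw [hker] at h1
  have hrankT : (A t)ᵀ.rank = (A 0)ᵀ.rank := by
    unfold Matrix.rank
    omega
  rw [← Matrix.rank_transpose (A t), ← Matrix.rank_transpose (A 0)]
  exact hrankT
end
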